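/- arXiv:1309.0230 — 2 statements merged into one kernel-verified Lean document; each statement's English description precedes it below -/
import Mathlib

section
/- For positive integers α ≥ β, the following rational identity holds: ∑_{j=0}^{α-β} (1/(j+β)) · C(-α-1, j) · C(α-β, j) = ∑_{j=0}^{β-1} ((-1)^{1+α}/(j+1+α-β)) · C(-α-1, j) · C(β-1, j). -/
/-- Generalized binomial coefficient `C(x,k) = x(x-1)⋯(x-k+1)/k!` for rational `x`. -/
def gbinom (x : ℚ) (k : ℕ) : ℚ := (∏ i ∈ Finset.range k, (x - i)) / (Nat.factorial k)

lemma gbinom_succ (x : ℚ) (j : ℕ) : gbinom x (j+1) = gbinom x j * (x - j) / (j+1) := by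
  unfold gbinom
  rw [Finset.prod_range_succ, Nat.factorial_succ]
  have h1 : ((j:ℚ)+1) ≠ 0 := by positivity
  have h2 : ((Nat.factorial j : ℕ) : ℚ) ≠ 0 := by
    exact_mod_cast Nat.factorial_ne_zero j
  push_cast
  rw [div_mul_eq_mul_div, div_div]
  congr 1
  ring

lemma gbinom_neg (α j : ℕ) : gbinom (-(α:ℚ) - 1) j = (-1)^j * ((α+j).choose j : ℚ) := by
  induction j with
  | zero => simp [gbinom]
  | succ j ih =>
    rw [gbinom_succ, ih]
    have h := Nat.add_one_mul_choose_eq (α + j) j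
    have hq : ((α+j+1 : ℕ):ℚ) * ((α+j).choose j : ℚ) = ((α+j+1).choose (j+1) : ℚ) * ((j:ℚ)+1) := by
      exact_mod_cast h
    have h1 : ((j:ℚ)+1) ≠ 0 := by positivity
    have : ((α + (j+1)).choose (j+1) : ℚ) = ((α+j+1).choose (j+1) : ℚ) := by norm_num [Nat.add_assoc]
    rw [this]
    field_simp
    push_cast at hq ⊢
    linear_combination (-(-1:ℚ)^j) * hq

lemma gbinom_nat (N j : ℕ) : gbinom (N:ℚ) j = (N.choose j : ℚ) := by
  induction j with
  | zero => simp [gbinom]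
  | succ j ih =>
    rw [gbinom_succ, ih]
    have h1 : ((j:ℚ)+1) ≠ 0 := by positivity
    rcases le_or_gt (j+1) N with h | h
    · have hc := Nat.choose_succ_right_eq N j
      have hq : (N.choose (j+1) : ℚ) * ((j:ℚ)+1) = (N.choose j : ℚ) * ((N:ℚ) - j) := by
        have : ((N - j : ℕ) : ℚ) = (N:ℚ) - j := by
          have : j ≤ N := by omega
          push_cast [this]; ring
        rw [← this]; exact_mod_cast hc
      field_simp
      linear_combination (-1:ℚ) * hq
    · have h2 : N.choose (j+1) = 0 := Nat.choose_eq_zero_of_lt h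
      rcases Nat.lt_or_ge N j with h3 | h3
      · have : N.choose j = 0 := Nat.choose_eq_zero_of_lt h3
        simp [this, h2]
      · have hNj : N = j := by omega
        subst hNj
        simp [h2]
noncomputable def Sd (n p q : ℕ) : ℚ :=
  ∑ i ∈ Finset.range (p+1), (-1:ℚ)^i * (p.choose i) * ((q+i).choose n)

lemma Sd_rec (n p q : ℕ) : Sd n (p+1) q = Sd n p q - Sd n p (q+1) := by
  unfold Sd
  rw [Finset.sum_range_succ' _ (p+1)]
  have e : ∀ i, (-1:ℚ)^(i+1) * ((p+1).choose (i+1)) * ((q+(i+1)).choose n)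
      = -((-1:ℚ)^i * (p.choose i) * (((q+1)+i).choose n))
        - (-1:ℚ)^i * (p.choose (i+1)) * (((q+1)+i).choose n) := by
    intro i
    have h : q + (i+1) = (q+1) + i := by omega
    rw [Nat.choose_succ_succ, h]
    push_cast
    ring
  rw [Finset.sum_congr rfl (fun i _ => e i), Finset.sum_sub_distrib]
  have hU : (∑ i ∈ Finset.range (p+1), (-1:ℚ)^i * (p.choose (i+1)) * (((q+1)+i).choose n))
      = ∑ i ∈ Finset.range p, (-1:ℚ)^i * (p.choose (i+1)) * (((q+1)+i).choose n) := by
    rw [Finset.sum_range_succ]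
    simp [Nat.choose_succ_self]
  have hS : (∑ i ∈ Finset.range (p+1), (-1:ℚ)^i * (p.choose i) * ((q+i).choose n))
      = -(∑ i ∈ Finset.range p, (-1:ℚ)^i * (p.choose (i+1)) * (((q+1)+i).choose n)) + (q.choose n : ℚ) := by
    rw [Finset.sum_range_succ' _ p]
    have e2 : ∀ i, (-1:ℚ)^(i+1) * (p.choose (i+1)) * ((q+(i+1)).choose n)
        = -((-1:ℚ)^i * (p.choose (i+1)) * (((q+1)+i).choose n)) := by
      intro i
      have h : q + (i+1) = (q+1) + i := by omega
      rw [h]; push_cast; ring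
    rw [Finset.sum_congr rfl (fun i _ => e2 i)]
    rw [Finset.sum_neg_distrib]
    simp
  rw [hU, hS]
  rw [Finset.sum_neg_distrib]
  simp only [Nat.choose_zero_right, Nat.cast_one, add_zero, one_mul]
  ring

lemma Sd_eval (n : ℕ) : ∀ p q : ℕ, p ≤ n →
    Sd n p q = (-1)^p * (q.choose (n-p) : ℚ) := by
  intro p
  induction p with
  | zero => intro q _; simp [Sd]
  | succ p ih =>
    intro q hp
    rw [Sd_rec, ih q (by omega), ih (q+1) (by omega)]
    have hr : n - p = (n-(p+1))+1 := by omega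
    rw [hr, Nat.choose_succ_succ']
    push_cast
    ring
lemma vand (m j : ℕ) : ((m+j).choose j : ℚ) = ∑ k ∈ Finset.range (j+1), (m.choose k : ℚ) * (j.choose k) := by
  have h := Nat.add_choose_eq m j j
  rw [Finset.Nat.sum_antidiagonal_eq_sum_range_succ_mk] at h
  have h2 : ∀ k ∈ Finset.range (j+1), (m.choose k) * (j.choose (j - k)) = (m.choose k) * (j.choose k) := by
    intro k hk
    rw [Finset.mem_range] at hk
    rw [Nat.choose_symm (by omega)]
  rw [Finset.sum_congr rfl h2] at h
  exact_mod_cast congrArg (Nat.cast : ℕ → ℚ) h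

lemma abj_inner (n m k : ℕ) (hk : k ≤ n) :
    ∑ j ∈ Finset.range (n+1), (-1:ℚ)^j * (n.choose j) * (j.choose k) * ((n+m+1+j).choose n)
      = (-1:ℚ)^n * (n.choose k) * ((n+m+1+k).choose k) := by
  have hsub : ∑ j ∈ Finset.range (n+1), (-1:ℚ)^j * (n.choose j) * (j.choose k) * ((n+m+1+j).choose n)
      = ∑ j ∈ Finset.Ico k (n+1), (-1:ℚ)^j * (n.choose j) * (j.choose k) * ((n+m+1+j).choose n) := by
    rw [Finset.range_eq_Ico]
    refine (Finset.sum_subset (Finset.Ico_subset_Ico (by omega) le_rfl) ?_).symm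
    intro x hx hx2
    rw [Finset.mem_Ico] at hx hx2
    have : x < k := by omega
    rw [Nat.choose_eq_zero_of_lt this]
    simp
  rw [hsub, Finset.sum_Ico_eq_sum_range]
  have hr : n + 1 - k = (n - k) + 1 := by omega
  rw [hr]
  have e : ∀ i ∈ Finset.range ((n-k)+1),
      (-1:ℚ)^(k+i) * (n.choose (k+i)) * ((k+i).choose k) * ((n+m+1+(k+i)).choose n)
      = ((-1:ℚ)^k * (n.choose k)) * ((-1:ℚ)^i * ((n-k).choose i) * (((n+m+1+k)+i).choose n)) := by
    intro i hi
    rw [Finset.mem_range] at hi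
    have htri := Nat.choose_mul (n := n) (show k ≤ k + i by omega)
    have htri' : (n.choose (k+i) : ℚ) * ((k+i).choose k) = (n.choose k : ℚ) * ((n-k).choose i) := by
      rw [Nat.add_sub_cancel_left] at htri
      exact_mod_cast htri
    have harg : n+m+1+(k+i) = (n+m+1+k)+i := by omega
    rw [harg]
    calc (-1:ℚ)^(k+i) * (n.choose (k+i)) * ((k+i).choose k) * (((n+m+1+k)+i).choose n)
        = (-1:ℚ)^(k+i) * ((n.choose (k+i) : ℚ) * ((k+i).choose k)) * (((n+m+1+k)+i).choose n) := by ring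
      _ = (-1:ℚ)^(k+i) * ((n.choose k : ℚ) * ((n-k).choose i)) * (((n+m+1+k)+i).choose n) := by rw [htri']
      _ = ((-1:ℚ)^k * (n.choose k)) * ((-1:ℚ)^i * ((n-k).choose i) * (((n+m+1+k)+i).choose n)) := by
          rw [pow_add]; ring
  rw [Finset.sum_congr rfl e, ← Finset.mul_sum]
  have hev : ∑ i ∈ Finset.range ((n-k)+1), (-1:ℚ)^i * ((n-k).choose i) * (((n+m+1+k)+i).choose n)
      = (-1:ℚ)^(n-k) * ((n+m+1+k).choose (n - (n-k))) := Sd_eval n (n-k) (n+m+1+k) (by omega)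
  rw [hev]
  have h1 : n - (n - k) = k := by omega
  have h2 : (-1:ℚ)^k * (-1:ℚ)^(n-k) = (-1:ℚ)^n := by
    rw [← pow_add]
    congr 1
    omega
  rw [h1]
  calc (-1:ℚ)^k * (n.choose k) * ((-1:ℚ)^(n-k) * ((n+m+1+k).choose k))
      = ((-1:ℚ)^k * (-1:ℚ)^(n-k)) * (n.choose k) * ((n+m+1+k).choose k) := by ring
    _ = (-1:ℚ)^n * (n.choose k) * ((n+m+1+k).choose k) := by rw [h2]

lemma keyK (n m : ℕ) :
    ∑ j ∈ Finset.range (n+1), (-1:ℚ)^j * (n.choose j) * ((n+m+1+j).choose n) * ((m+j).choose m)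
      = (-1:ℚ)^n * ∑ k ∈ Finset.range (n+1), (n.choose k : ℚ) * (m.choose k) * ((n+m+1+k).choose k) := by
  have step : ∀ j ∈ Finset.range (n+1),
      (-1:ℚ)^j * (n.choose j) * ((n+m+1+j).choose n) * ((m+j).choose m)
      = ∑ k ∈ Finset.range (n+1),
          (m.choose k : ℚ) * ((-1:ℚ)^j * (n.choose j) * (j.choose k) * ((n+m+1+j).choose n)) := by
    intro j hj
    rw [Finset.mem_range] at hj
    have hsymm : ((m+j).choose m : ℚ) = ((m+j).choose j : ℚ) := by
      norm_cast
      rw [← Nat.choose_symm (Nat.le_add_left j m)]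
      congr 1
      omega
    rw [hsymm, vand m j, Finset.mul_sum]
    have ext : ∑ k ∈ Finset.range (j+1),
        (-1:ℚ)^j * (n.choose j) * ((n+m+1+j).choose n) * ((m.choose k : ℚ) * (j.choose k))
        = ∑ k ∈ Finset.range (n+1),
        (-1:ℚ)^j * (n.choose j) * ((n+m+1+j).choose n) * ((m.choose k : ℚ) * (j.choose k)) := by
      refine Finset.sum_subset (Finset.range_subset_range.2 (by omega)) ?_
      intro x hx hx2
      rw [Finset.mem_range] at hx hx2
      rw [Nat.choose_eq_zero_of_lt (show j < x by omega)]
      simp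
    rw [ext]
    exact Finset.sum_congr rfl (fun k _ => by ring)
  rw [Finset.sum_congr rfl step, Finset.sum_comm]
  have inner : ∀ k ∈ Finset.range (n+1),
      ∑ j ∈ Finset.range (n+1),
          (m.choose k : ℚ) * ((-1:ℚ)^j * (n.choose j) * (j.choose k) * ((n+m+1+j).choose n))
      = (m.choose k : ℚ) * ((-1:ℚ)^n * (n.choose k) * ((n+m+1+k).choose k)) := by
    intro k hk
    rw [Finset.mem_range] at hk
    rw [← Finset.mul_sum, abj_inner n m k (by omega)]
  rw [Finset.sum_congr rfl inner, Finset.mul_sum]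
  exact Finset.sum_congr rfl (fun k _ => by ring)

lemma Tsymm (n m : ℕ) :
    ∑ k ∈ Finset.range (n+1), (n.choose k : ℚ) * (m.choose k) * ((n+m+1+k).choose k)
      = ∑ k ∈ Finset.range (m+1), (m.choose k : ℚ) * (n.choose k) * ((m+n+1+k).choose k) := by
  have e1 : ∑ k ∈ Finset.range (n+1), (n.choose k : ℚ) * (m.choose k) * ((n+m+1+k).choose k)
      = ∑ k ∈ Finset.range (n+m+2), (n.choose k : ℚ) * (m.choose k) * ((n+m+1+k).choose k) := by
    refine Finset.sum_subset (Finset.range_subset_range.2 (by omega)) ?_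
    intro x hx hx2
    rw [Finset.mem_range] at hx hx2
    rw [Nat.choose_eq_zero_of_lt (show n < x by omega)]
    simp
  have e2 : ∑ k ∈ Finset.range (m+1), (m.choose k : ℚ) * (n.choose k) * ((m+n+1+k).choose k)
      = ∑ k ∈ Finset.range (n+m+2), (m.choose k : ℚ) * (n.choose k) * ((m+n+1+k).choose k) := by
    refine Finset.sum_subset (Finset.range_subset_range.2 (by omega)) ?_
    intro x hx hx2
    rw [Finset.mem_range] at hx hx2
    rw [Nat.choose_eq_zero_of_lt (show m < x by omega)]
    simp
  rw [e1, e2]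
  refine Finset.sum_congr rfl (fun k _ => ?_)
  have : n+m+1+k = m+n+1+k := by omega
  rw [this]
  ring

lemma conv_term (n m j : ℕ) :
    (1/((j:ℚ) + (m+1))) * ((-1:ℚ)^j * (((n+m+1)+j).choose j : ℚ)) * ((n.choose j):ℚ)
    = ((n.factorial : ℚ) * (m.factorial) / ((n+m+1).factorial))
      * ((-1:ℚ)^j * (n.choose j) * (((n+m+1+j).choose n) : ℚ) * (((m+j).choose m) : ℚ)) := by
  have hd : (m+j).choose m * m.factorial * j.factorial = (m+j).factorial := by
    have := Nat.choose_mul_factorial_mul_factorial (Nat.le_add_right m j)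
    rwa [Nat.add_sub_cancel_left] at this
  have hc : (n+m+1+j).choose n * n.factorial * (m+1+j).factorial = (n+m+1+j).factorial := by
    have h := Nat.choose_mul_factorial_mul_factorial (show n ≤ n+m+1+j by omega)
    have : n+m+1+j-n = m+1+j := by omega
    rwa [this] at h
  have ha : (n+m+1+j).choose j * j.factorial * (n+m+1).factorial = (n+m+1+j).factorial := by
    have h := Nat.choose_mul_factorial_mul_factorial (show j ≤ n+m+1+j by omega)
    have : n+m+1+j-j = n+m+1 := by omega
    rwa [this] at h
  have h4 : (m+1+j).factorial = (m+1+j) * (m+j).factorial := by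
    have : m+1+j = (m+j)+1 := by omega
    rw [this, Nat.factorial_succ]
  have key : ((n+m+1+j).choose j * (n+m+1).factorial) * j.factorial
      = ((m+1+j) * n.factorial * ((n+m+1+j).choose n) * m.factorial * ((m+j).choose m)) * j.factorial := by
    calc ((n+m+1+j).choose j * (n+m+1).factorial) * j.factorial
        = (n+m+1+j).choose j * j.factorial * (n+m+1).factorial := by ring
      _ = (n+m+1+j).factorial := ha
      _ = (n+m+1+j).choose n * n.factorial * (m+1+j).factorial := hc.symm
      _ = (n+m+1+j).choose n * n.factorial * ((m+1+j) * ((m+j).choose m * m.factorial * j.factorial)) := by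
          rw [h4, hd]
      _ = ((m+1+j) * n.factorial * ((n+m+1+j).choose n) * m.factorial * ((m+j).choose m)) * j.factorial := by
          ring
  have hN := Nat.eq_of_mul_eq_mul_right (Nat.factorial_pos j) key
  have hQ : ((n+m+1+j).choose j : ℚ) * ((n+m+1).factorial : ℚ)
      = ((m:ℚ)+1+(j:ℚ)) * (n.factorial : ℚ) * (((n+m+1+j).choose n):ℚ) * (m.factorial : ℚ)
        * (((m+j).choose m):ℚ) := by
    exact_mod_cast congrArg (Nat.cast : ℕ → ℚ) hN
  have hj0 : (j:ℚ) + ((m:ℚ)+1) ≠ 0 := by positivity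
  have hf0 : ((n+m+1).factorial : ℚ) ≠ 0 := by exact_mod_cast Nat.factorial_ne_zero _
  have harg : (n+m+1)+j = n+m+1+j := by omega
  rw [harg]
  field_simp
  linear_combination (n.choose j : ℚ) * hQ


/-- Lemma 1 of the paper: for positive integers `α ≥ β`,
`∑_{j=0}^{α-β} C(-α-1,j) C(α-β,j)/(j+β)
 = ∑_{j=0}^{β-1} (-1)^{1+α} C(-α-1,j) C(β-1,j)/(j+1+α-β)`. -/
theorem lemma_abj (α β : ℕ) (hβ : 1 ≤ β) (hβα : β ≤ α) :
    ∑ j ∈ Finset.range (α - β + 1),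
        (1 / ((j : ℚ) + β)) * gbinom (-(α : ℚ) - 1) j * gbinom ((α : ℚ) - β) j
      = ∑ j ∈ Finset.range β,
        ((-1 : ℚ)^(1 + α) / ((j : ℚ) + 1 + α - β)) * gbinom (-(α : ℚ) - 1) j
          * gbinom ((β : ℚ) - 1) j := by
  obtain ⟨m, rfl⟩ : ∃ m, β = m + 1 := ⟨β - 1, by omega⟩
  obtain ⟨n, rfl⟩ : ∃ n, α = n + m + 1 := ⟨α - (m+1), by omega⟩
  have hsub : n + m + 1 - (m + 1) = n := by omega
  rw [hsub]
  have e2 : ((n+m+1 : ℕ):ℚ) - ((m+1 : ℕ):ℚ) = ((n:ℕ):ℚ) := by push_cast; ring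
  have e3 : ((m+1 : ℕ):ℚ) - 1 = ((m:ℕ):ℚ) := by push_cast; ring
  set c : ℚ := (n.factorial : ℚ) * (m.factorial) / ((n+m+1).factorial) with hc
  have L : ∀ j ∈ Finset.range (n+1),
      (1 / ((j : ℚ) + ((m+1:ℕ):ℚ))) * gbinom (-((n+m+1:ℕ) : ℚ) - 1) j
        * gbinom (((n+m+1:ℕ) : ℚ) - ((m+1:ℕ):ℚ)) j
      = c * ((-1:ℚ)^j * (n.choose j) * (((n+m+1+j).choose n) : ℚ) * (((m+j).choose m) : ℚ)) := by
    intro j _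
    rw [e2, gbinom_neg (n+m+1) j, gbinom_nat n j]
    have hden : ((j:ℚ) + ((m+1:ℕ):ℚ)) = (j:ℚ) + ((m:ℚ)+1) := by push_cast; ring
    rw [hden]
    exact conv_term n m j
  have hcomm : m+n+1 = n+m+1 := by omega
  have R : ∀ j ∈ Finset.range (m+1),
      ((-1 : ℚ)^(1 + (n+m+1)) / ((j : ℚ) + 1 + ((n+m+1:ℕ):ℚ) - ((m+1:ℕ):ℚ)))
          * gbinom (-((n+m+1:ℕ) : ℚ) - 1) j * gbinom (((m+1:ℕ) : ℚ) - 1) j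
      = ((-1:ℚ)^(n+m) * c)
        * ((-1:ℚ)^j * (m.choose j) * (((n+m+1+j).choose m) : ℚ) * (((n+j).choose n) : ℚ)) := by
    intro j _
    rw [e3, gbinom_neg (n+m+1) j, gbinom_nat m j]
    have hden : (j:ℚ) + 1 + ((n+m+1:ℕ):ℚ) - ((m+1:ℕ):ℚ) = (j:ℚ) + ((n:ℚ)+1) := by
      push_cast; ring
    rw [hden]
    have hsign : (-1:ℚ)^(1 + (n+m+1)) = (-1:ℚ)^(n+m) := by
      rw [show 1 + (n+m+1) = (n+m)+2 by omega, pow_add]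
      norm_num
    rw [hsign]
    have hct := conv_term m n j
    rw [hcomm] at hct
    calc (-1:ℚ)^(n+m) / ((j:ℚ) + ((n:ℚ)+1)) * ((-1:ℚ)^j * (((n+m+1+j).choose j) : ℚ))
          * ((m.choose j) : ℚ)
        = (-1:ℚ)^(n+m) * ((1 / ((j:ℚ) + ((n:ℚ)+1))) * ((-1:ℚ)^j * (((n+m+1+j).choose j) : ℚ))
            * ((m.choose j) : ℚ)) := by ring
      _ = (-1:ℚ)^(n+m) * (((m.factorial : ℚ) * (n.factorial) / ((n+m+1).factorial))
            * ((-1:ℚ)^j * (m.choose j) * (((n+m+1+j).choose m) : ℚ) * (((n+j).choose n) : ℚ))) := by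
          rw [hct]
      _ = ((-1:ℚ)^(n+m) * c)
            * ((-1:ℚ)^j * (m.choose j) * (((n+m+1+j).choose m) : ℚ) * (((n+j).choose n) : ℚ)) := by
          rw [hc]; ring
  rw [Finset.sum_congr rfl L, Finset.sum_congr rfl R, ← Finset.mul_sum, ← Finset.mul_sum]
  have hK1 := keyK n m
  have hK2 := keyK m n
  rw [hcomm] at hK2
  have hT := Tsymm n m
  rw [hcomm] at hT
  rw [hK1, hK2, hT]
  have hs : (-1:ℚ)^(n+m) * (-1:ℚ)^m = (-1:ℚ)^n := by
    rw [pow_add, mul_assoc, ← pow_add, show m+m = 2*m by omega, pow_mul]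
    norm_num
  calc c * ((-1:ℚ)^n * ∑ k ∈ Finset.range (m+1), (m.choose k : ℚ) * (n.choose k) * ((n+m+1+k).choose k))
      = ((-1:ℚ)^(n+m) * (-1:ℚ)^m) * (c * ∑ k ∈ Finset.range (m+1), (m.choose k : ℚ) * (n.choose k) * ((n+m+1+k).choose k)) := by
        rw [hs]; ring
    _ = (-1:ℚ)^(n+m) * c * ((-1:ℚ)^m * ∑ k ∈ Finset.range (m+1), (m.choose k : ℚ) * (n.choose k) * ((n+m+1+k).choose k)) := by ring
end

section
/- For a prime p ≥ 5, ∑_{k=0}^{p-1} ((1/2)_k)^2 / (k!)^2 ≡ (-1)^{(p-1)/2} (mod p^2), i.e., the truncated ₂F₁[1/2, 1/2; 1 | 1]_p is congruent to the Legendre symbol (-1/p) modulo p². -/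
open Finset

/-- Rising factorial (Pochhammer symbol) `(x)_k = x(x+1)⋯(x+k-1)`. -/
def rise (x : ℚ) (k : ℕ) : ℚ := ∏ i ∈ Finset.range k, (x + i)

lemma rise_succ (x : ℚ) (k : ℕ) : rise x (k+1) = rise x k * (x + k) := by
  simp [rise, Finset.prod_range_succ]

lemma rise_neg_nat (m : ℕ) : ∀ k, k ≤ m → rise (-(m:ℚ)) k = (-1)^k * (m.choose k) * k.factorial := by
  intro k
  induction k with
  | zero => intro _; simp [rise]
  | succ k ih =>
    intro hk
    rw [rise_succ, ih (by omega)]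
    have h1 : (-(m:ℚ) + k) = -((m - k : ℕ) : ℚ) := by
      have : ((m - k : ℕ) : ℚ) = (m : ℚ) - k := by
        push_cast [Nat.cast_sub (show k ≤ m by omega)]; ring
      rw [this]; ring
    rw [h1]
    have h2 : (m.choose (k+1)) * (k+1) = m.choose k * (m - k) := Nat.choose_succ_right_eq m k
    have h2' : ((m.choose (k+1)) : ℚ) * (k+1) = (m.choose k) * ((m-k : ℕ) : ℚ) := by
      exact_mod_cast congrArg (Nat.cast : ℕ → ℚ) h2
    have hf : ((k+1).factorial : ℚ) = (k.factorial : ℚ) * (k+1) := by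
      rw [Nat.factorial_succ]; push_cast; ring
    rw [pow_succ, hf]
    linear_combination (-(1:ℚ))^k * (k.factorial : ℚ) * h2'

lemma rise_pos_nat (m : ℕ) : ∀ k, rise ((m:ℚ)+1) k = ((m+k).choose k) * k.factorial := by
  intro k
  induction k with
  | zero => simp [rise]
  | succ k ih =>
    rw [rise_succ, ih]
    have h2 : (m+k+1) * ((m+k).choose k) = (m+k+1).choose (k+1) * (k+1) :=
      Nat.add_one_mul_choose_eq (m+k) k
    have h2' : ((m:ℚ)+k+1) * ((m+k).choose k) = ((m+k+1).choose (k+1)) * (k+1) := by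
      exact_mod_cast congrArg (Nat.cast : ℕ → ℚ) h2
    have hf : ((k+1).factorial : ℚ) = (k.factorial : ℚ) * (k+1) := by
      rw [Nat.factorial_succ]; push_cast; ring
    have hmk : (m + (k+1)) = (m+k+1) := by omega
    rw [hf, hmk]
    linear_combination (k.factorial : ℚ) * h2'

lemma rise_neg_zero (m k : ℕ) (h : m < k) : rise (-(m:ℚ)) k = 0 := by
  apply Finset.prod_eq_zero (Finset.mem_range.mpr h)
  simp

-- inner alternating sum
lemma inner_alt (m j : ℕ) (hj : j ≤ m) :
    ∑ k ∈ range (m+1), (-1:ℤ)^k * (m.choose k) * (k.choose j)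
      = (-1:ℤ)^j * (m.choose j) * (if m = j then 1 else 0) := by
  have h1 : ∑ k ∈ range (m+1), (-1:ℤ)^k * (m.choose k) * (k.choose j)
      = ∑ k ∈ Ico j (m+1), (-1:ℤ)^k * (m.choose k) * (k.choose j) := by
    rw [range_eq_Ico]
    refine (Finset.sum_subset (Finset.Ico_subset_Ico (Nat.zero_le _) le_rfl) ?_).symm
    intro k hk hk'
    simp only [mem_Ico] at hk hk'
    have : k < j := by omega
    simp [Nat.choose_eq_zero_of_lt this]
  rw [h1, Finset.sum_Ico_eq_sum_range]
  have h2 : ∀ t ∈ range (m + 1 - j), (-1:ℤ)^(j+t) * (m.choose (j+t)) * ((j+t).choose j)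
      = ((-1:ℤ)^j * (m.choose j)) * ((-1:ℤ)^t * ((m-j).choose t)) := by
    intro t ht
    simp only [mem_range] at ht
    have h3 : m.choose (j+t) * (j+t).choose j = m.choose j * (m-j).choose t := by
      have := Nat.choose_mul (n := m) (show j ≤ j + t by omega)
      simpa using this
    have h3' : ((m.choose (j+t)) : ℤ) * ((j+t).choose j) = (m.choose j) * ((m-j).choose t) := by
      exact_mod_cast congrArg (Nat.cast : ℕ → ℤ) h3
    rw [pow_add]
    calc (-1:ℤ)^j * (-1)^t * (m.choose (j+t)) * ((j+t).choose j)
        = (-1:ℤ)^j * (-1)^t * ((m.choose (j+t)) * ((j+t).choose j)) := by ring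
      _ = (-1:ℤ)^j * (-1)^t * ((m.choose j) * ((m-j).choose t)) := by rw [h3']
      _ = (-1:ℤ)^j * (m.choose j) * ((-1:ℤ)^t * ((m-j).choose t)) := by ring
  rw [Finset.sum_congr rfl h2, ← Finset.mul_sum]
  have h4 : m + 1 - j = (m - j) + 1 := by omega
  rw [h4, Int.alternating_sum_range_choose]
  congr 1
  by_cases h : m = j
  · simp [h]
  · rw [if_neg h, if_neg (by omega)]

lemma expand_choose (m k : ℕ) (hk : k ≤ m) :
    (m+k).choose k = ∑ j ∈ range (m+1), m.choose j * k.choose j := by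
  rw [Nat.add_choose_eq]
  rw [Finset.Nat.sum_antidiagonal_eq_sum_range_succ_mk]
  have h1 : ∀ j ∈ range (k+1), m.choose j * k.choose (k - j) = m.choose j * k.choose j := by
    intro j hj
    simp only [mem_range] at hj
    rw [Nat.choose_symm (by omega)]
  rw [Finset.sum_congr rfl h1]
  refine Finset.sum_subset ?_ ?_
  · intro x hx; simp only [mem_range] at hx ⊢; omega
  · intro j hj hj'
    simp only [mem_range] at hj hj'
    rw [Nat.choose_eq_zero_of_lt (show k < j by omega), Nat.mul_zero]

lemma alt_ident (m : ℕ) :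
    ∑ k ∈ range (m+1), (-1:ℤ)^k * (m.choose k) * ((m+k).choose k) = (-1:ℤ)^m := by
  have h1 : ∀ k ∈ range (m+1), (-1:ℤ)^k * (m.choose k) * ((m+k).choose k)
      = ∑ j ∈ range (m+1), (m.choose j : ℤ) * ((-1:ℤ)^k * (m.choose k) * (k.choose j)) := by
    intro k hk
    simp only [mem_range] at hk
    have := expand_choose m k (by omega)
    have hc : ((m+k).choose k : ℤ) = ∑ j ∈ range (m+1), (m.choose j : ℤ) * (k.choose j) := by
      exact_mod_cast congrArg (Nat.cast : ℕ → ℤ) this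
    rw [hc, Finset.mul_sum]
    exact Finset.sum_congr rfl (fun j hj => by ring)
  rw [Finset.sum_congr rfl h1, Finset.sum_comm]
  have h2 : ∀ j ∈ range (m+1),
      ∑ k ∈ range (m+1), (m.choose j : ℤ) * ((-1:ℤ)^k * (m.choose k) * (k.choose j))
        = (m.choose j : ℤ) * ((-1:ℤ)^j * (m.choose j) * (if m = j then 1 else 0)) := by
    intro j hj
    simp only [mem_range] at hj
    rw [← Finset.mul_sum, inner_alt m j (by omega)]
  rw [Finset.sum_congr rfl h2]
  rw [Finset.sum_eq_single m]
  · simp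
  · intro j hj hj'
    rw [if_neg (by omega), mul_zero, mul_zero]
  · intro h; simp at h

lemma padic_prod_le_one (p : ℕ) [Fact p.Prime] (b : ℕ → ℚ) (n : ℕ)
    (hb : ∀ i, padicNorm p (b i) ≤ 1) : padicNorm p (∏ i ∈ range n, b i) ≤ 1 := by
  induction n with
  | zero => simp [padicNorm.one]
  | succ n ih =>
    rw [prod_range_succ, padicNorm.mul]
    exact mul_le_one₀ ih (padicNorm.nonneg _) (hb n)

lemma padic_prod_sub (p : ℕ) [Fact p.Prime] (a b : ℕ → ℚ) (n : ℕ)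
    (ha : ∀ i, padicNorm p (a i) ≤ 1) (hb : ∀ i, padicNorm p (b i) ≤ 1)
    (hab : ∀ i, padicNorm p (a i - b i) ≤ ((p:ℚ)^2)⁻¹) :
    padicNorm p ((∏ i ∈ range n, a i) - ∏ i ∈ range n, b i) ≤ ((p:ℚ)^2)⁻¹ := by
  have hinv : (0:ℚ) ≤ ((p:ℚ)^2)⁻¹ := by positivity
  induction n with
  | zero => simp [padicNorm.zero, hinv]
  | succ n ih =>
    have key : (∏ i ∈ range (n+1), a i) - ∏ i ∈ range (n+1), b i
        = a n * ((∏ i ∈ range n, a i) - ∏ i ∈ range n, b i)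
          + (a n - b n) * ∏ i ∈ range n, b i := by
      rw [prod_range_succ, prod_range_succ]; ring
    rw [key]
    refine le_trans padicNorm.nonarchimedean (max_le ?_ ?_)
    · rw [padicNorm.mul]
      calc padicNorm p (a n) * padicNorm p ((∏ i ∈ range n, a i) - ∏ i ∈ range n, b i)
          ≤ 1 * ((p:ℚ)^2)⁻¹ :=
            mul_le_mul (ha n) ih (padicNorm.nonneg _) zero_le_one
        _ = ((p:ℚ)^2)⁻¹ := one_mul _
    · rw [padicNorm.mul]
      calc padicNorm p (a n - b n) * padicNorm p (∏ i ∈ range n, b i)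
          ≤ ((p:ℚ)^2)⁻¹ * 1 :=
            mul_le_mul (hab n) (padic_prod_le_one p b n hb) (padicNorm.nonneg _) hinv
        _ = ((p:ℚ)^2)⁻¹ := mul_one _

lemma padic_factorial (p : ℕ) [hpf : Fact p.Prime] (k : ℕ) (hk : k < p) :
    padicNorm p ((k.factorial : ℚ)) = 1 := by
  rw [show ((k.factorial : ℚ)) = ((k.factorial : ℕ) : ℚ) by norm_num]
  rw [padicNorm.nat_eq_one_iff]
  intro hdvd
  exact absurd ((Nat.Prime.dvd_factorial hpf.out).mp hdvd) (by omega)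

/-- Mortenson's congruence: for a prime `p ≥ 5`,
`∑_{k=0}^{p-1} ((1/2)_k)² / (k!)² ≡ (-1)^{(p-1)/2} (mod p²)`. -/
theorem mortenson_half (p : ℕ) (hp : p.Prime) (hp5 : 5 ≤ p) :
    padicNorm p
        ((∑ k ∈ Finset.range p, (rise (1/2 : ℚ) k)^2 / ((k.factorial : ℚ))^2)
          - (-1 : ℚ)^((p - 1) / 2))
      ≤ ((p : ℚ)^2)⁻¹ := by
  haveI : Fact p.Prime := ⟨hp⟩
  set m : ℕ := (p - 1) / 2 with hm
  have hodd : Odd p := hp.odd_of_ne_two (by omega)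
  obtain ⟨m', hm'⟩ := hodd
  have hpm : p = 2 * m + 1 := by omega
  have hpQ : (p : ℚ) = 2 * (m : ℚ) + 1 := by exact_mod_cast congrArg (Nat.cast : ℕ → ℚ) hpm
  -- the two families of factors
  set a : ℕ → ℚ := fun i => ((1:ℚ)/2 + i)^2 with hA
  set b : ℕ → ℚ := fun i => ((1:ℚ)/2 + i)^2 - ((p:ℚ)/2)^2 with hB
  -- rewriting rises as products
  have hrise_a : ∀ k, (rise (1/2 : ℚ) k)^2 = ∏ i ∈ range k, a i := by
    intro k
    rw [rise, ← Finset.prod_pow]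
  have hrise_b : ∀ k, rise (-(m:ℚ)) k * rise ((m:ℚ)+1) k = ∏ i ∈ range k, b i := by
    intro k
    rw [rise, rise, ← Finset.prod_mul_distrib]
    refine Finset.prod_congr rfl (fun i _ => ?_)
    simp only [hB]
    rw [hpQ]; ring
  -- norm bounds on factors
  have hp2 : padicNorm p (2:ℚ) = 1 := by
    rw [show ((2:ℚ)) = ((2:ℕ):ℚ) by norm_num, padicNorm.nat_eq_one_iff]
    intro h; have := Nat.le_of_dvd (by norm_num) h; omega
  have hhalf : ∀ i : ℕ, padicNorm p ((1:ℚ)/2 + i) ≤ 1 := by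
    intro i
    have : ((1:ℚ)/2 + i) = ((2*i+1 : ℕ) : ℚ) / 2 := by push_cast; ring
    rw [this, padicNorm.div, hp2, div_one]
    exact padicNorm.of_nat _
  have ha : ∀ i, padicNorm p (a i) ≤ 1 := by
    intro i
    simp only [hA, sq, padicNorm.mul]
    exact mul_le_one₀ (hhalf i) (padicNorm.nonneg _) (hhalf i)
  have habnorm : ∀ i : ℕ, padicNorm p (a i - b i) = ((p:ℚ)^2)⁻¹ := by
    intro i
    have h1 : a i - b i = ((p:ℚ)/2)^2 := by simp [hA, hB]
    rw [h1, sq, padicNorm.mul, padicNorm.div, hp2, div_one, padicNorm.padicNorm_p (by omega)]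
    rw [sq, mul_inv]
  have hinvle : ((p:ℚ)^2)⁻¹ ≤ 1 := by
    rw [inv_le_one_iff₀]
    right
    have : (5:ℚ) ≤ (p:ℚ) := by exact_mod_cast hp5
    nlinarith
  have hb : ∀ i, padicNorm p (b i) ≤ 1 := by
    intro i
    have : b i = a i + (-(a i - b i)) := by ring
    rw [this]
    refine le_trans padicNorm.nonarchimedean (max_le (ha i) ?_)
    rw [padicNorm.neg, habnorm i]
    exact hinvle
  -- per-term congruence
  have hterm : ∀ k ∈ range p,
      padicNorm p ((rise (1/2 : ℚ) k)^2 / ((k.factorial : ℚ))^2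
        - rise (-(m:ℚ)) k * rise ((m:ℚ)+1) k / ((k.factorial : ℚ))^2) ≤ ((p:ℚ)^2)⁻¹ := by
    intro k hk
    simp only [mem_range] at hk
    rw [div_sub_div_same, padicNorm.div, hrise_a, hrise_b]
    rw [sq, padicNorm.mul, padic_factorial p k hk, mul_one, div_one]
    exact padic_prod_sub p a b k ha hb (fun i => le_of_eq (habnorm i))
  -- the exact sum of the b-side
  have hsumR : ∑ k ∈ range p, rise (-(m:ℚ)) k * rise ((m:ℚ)+1) k / ((k.factorial : ℚ))^2
      = (-1:ℚ)^m := by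
    have hsub : ∑ k ∈ range p, rise (-(m:ℚ)) k * rise ((m:ℚ)+1) k / ((k.factorial : ℚ))^2
        = ∑ k ∈ range (m+1), rise (-(m:ℚ)) k * rise ((m:ℚ)+1) k / ((k.factorial : ℚ))^2 := by
      refine (Finset.sum_subset ?_ ?_).symm
      · intro x hx; simp only [mem_range] at hx ⊢; omega
      · intro k hk hk'
        simp only [mem_range] at hk hk'
        rw [rise_neg_zero m k (by omega), zero_mul, zero_div]
    rw [hsub]
    have hterm2 : ∀ k ∈ range (m+1),
        rise (-(m:ℚ)) k * rise ((m:ℚ)+1) k / ((k.factorial : ℚ))^2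
          = (-1:ℚ)^k * (m.choose k) * ((m+k).choose k) := by
      intro k hk
      simp only [mem_range] at hk
      rw [rise_neg_nat m k (by omega), rise_pos_nat m k]
      have hfne : ((k.factorial : ℚ)) ≠ 0 := by
        exact_mod_cast Nat.cast_ne_zero.mpr (Nat.factorial_ne_zero k)
      field_simp
    rw [Finset.sum_congr rfl hterm2]
    have := alt_ident m
    have hcast : ((∑ k ∈ range (m+1), (-1:ℤ)^k * (m.choose k) * ((m+k).choose k) : ℤ) : ℚ)
        = (((-1:ℤ)^m : ℤ) : ℚ) := by exact_mod_cast congrArg (Int.cast : ℤ → ℚ) this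
    push_cast at hcast
    rw [← hcast]
  -- assemble
  have hsplit : (∑ k ∈ Finset.range p, (rise (1/2 : ℚ) k)^2 / ((k.factorial : ℚ))^2)
        - (-1 : ℚ)^((p - 1) / 2)
      = ∑ k ∈ range p, ((rise (1/2 : ℚ) k)^2 / ((k.factorial : ℚ))^2
          - rise (-(m:ℚ)) k * rise ((m:ℚ)+1) k / ((k.factorial : ℚ))^2) := by
    rw [Finset.sum_sub_distrib, hsumR]
  rw [hsplit]
  exact padicNorm.sum_le' hterm (by positivity)
end
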